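/- arXiv:1903.09844 — 2 statements merged into one kernel-verified Lean document; each statement's English description precedes it below -/
import Mathlib

section
/- Let the sequence (α_k) be defined by α_1 = 1/(2L) and, for k ≥ 1, the relation A_{k+1} = A_k + α_{k+1} = 2L α_{k+1}^2 where A_k = ∑_{i=1}^k α_i and L > 0. Then for all k ≥ 0, α_{k+1} ≤ (k+2)/(2L). -/
/-- Let `α` be a sequence of positive reals with `α 1 = 1/(2L)` and, for `k ≥ 1`,
`∑_{i=1}^{k+1} α i = 2 L (α (k+1))²`.  Then for all `k ≥ 0`, `α (k+1) ≤ (k+2)/(2L)`. -/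
theorem stmt_0 (L : ℝ) (hL : 0 < L) (α : ℕ → ℝ)
    (hpos : ∀ k, 1 ≤ k → 0 < α k)
    (h1 : α 1 = 1 / (2 * L))
    (hrec : ∀ k : ℕ, 1 ≤ k → ∑ i ∈ Finset.Icc 1 (k + 1), α i = 2 * L * (α (k + 1)) ^ 2) :
    ∀ k : ℕ, α (k + 1) ≤ (k + 2) / (2 * L) := by
  have hL2 : 0 < 2 * L := by linarith
  have hL4 : 0 < 4 * L := by linarith
  have key : ∀ k : ℕ, α (k + 1) ≤ ((k : ℝ) + 2) / (2 * L) ∧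
      ∑ i ∈ Finset.Icc 1 (k + 1), α i ≤ ((k : ℝ) + 1) * ((k : ℝ) + 4) / (4 * L) := by
    intro k
    induction k with
    | zero =>
      constructor
      · rw [h1]
        push_cast
        rw [div_le_div_iff₀ hL2 hL2]
        nlinarith
      · simp only [Finset.Icc_self, Finset.sum_singleton, h1]
        push_cast
        rw [div_le_div_iff₀ hL2 hL4]
        nlinarith
    | succ n ih =>
      obtain ⟨-, hS⟩ := ih
      set a := α (n + 2) with ha_def
      have ha : 0 < a := hpos _ (by omega)
      have hrec' := hrec (n + 1) (by omega)
      have hsum : ∑ i ∈ Finset.Icc 1 (n + 2), α i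
          = (∑ i ∈ Finset.Icc 1 (n + 1), α i) + a := by
        rw [Finset.sum_Icc_succ_top (by omega : 1 ≤ n + 2)]
      have hS4 : (∑ i ∈ Finset.Icc 1 (n + 1), α i) * (4 * L) ≤ ((n : ℝ) + 1) * ((n : ℝ) + 4) := by
        rw [← le_div_iff₀ hL4]; exact hS
      have hq : (2 * L * a ^ 2 - a) * (4 * L) ≤ ((n : ℝ) + 1) * ((n : ℝ) + 4) := by
        have : 2 * L * a ^ 2 - a = ∑ i ∈ Finset.Icc 1 (n + 1), α i := by
          rw [hsum] at hrec'; linarith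
        rw [this]; exact hS4
      have hbound : a ≤ ((n : ℝ) + 3) / (2 * L) := by
        by_contra hc
        push_neg at hc
        rw [div_lt_iff₀ hL2] at hc
        nlinarith [mul_pos hL ha, sq_nonneg a, sq_nonneg (2 * L * a)]
      have hbound' : a * (2 * L) ≤ (n : ℝ) + 3 := by
        rw [← le_div_iff₀ hL2]; exact hbound
      constructor
      · push_cast
        calc a ≤ ((n : ℝ) + 3) / (2 * L) := hbound
          _ = ((n : ℝ) + 1 + 2) / (2 * L) := by ring_nf
      · rw [hsum]
        push_cast
        rw [le_div_iff₀ hL4]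
        nlinarith
  intro k
  exact (key k).1
end

section
/- If a sequence of nonnegative reals satisfies R_l² ≤ 2ud ( 2A + ud ∑_{k=0}^{l-2} R_k² + E·l(l+3) ) for all 1 ≤ l ≤ N, where ud ≥ 1 and A, E ≥ 0, then R_l² ≤ (2A + ud R_0² + E·l(l+3)) (2ud)^l for all 1 ≤ l ≤ N. -/
set_option maxHeartbeats 1000000


/-- Unrolling the recurrence: if `R_l² ≤ 2ud(2A + ud ∑_{k=0}^{l-2} R_k² + E l(l+3))`
for `1 ≤ l ≤ N`, with `ud ≥ 1`, then `R_l² ≤ (2A + ud R_0² + E l(l+3))(2ud)^l`. -/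
theorem stmt_13 (ud A E : ℝ) (hud : 1 ≤ ud) (hA : 0 ≤ A) (hE : 0 ≤ E)
    (N : ℕ) (R : ℕ → ℝ) (hR : ∀ k, 0 ≤ R k)
    (h : ∀ l : ℕ, 1 ≤ l → l ≤ N →
      (R l) ^ 2 ≤ 2 * ud * (2 * A + ud * ∑ k ∈ Finset.range (l - 1), (R k) ^ 2
        + E * (l : ℝ) * ((l : ℝ) + 3))) :
    ∀ l : ℕ, 1 ≤ l → l ≤ N →
      (R l) ^ 2 ≤ (2 * A + ud * (R 0) ^ 2 + E * (l : ℝ) * ((l : ℝ) + 3)) * (2 * ud) ^ l := by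
  have hud0 : (0:ℝ) ≤ ud := le_trans zero_le_one hud
  have hx1 : (1:ℝ) ≤ 2 * ud := by linarith
  have hx0 : (0:ℝ) ≤ 2 * ud := by linarith
  have key : ∀ l : ℕ, 1 ≤ l → l ≤ N →
      2 * A + ud * ∑ k ∈ Finset.range (l - 1), (R k) ^ 2 + E * (l : ℝ) * ((l : ℝ) + 3)
        ≤ (2 * A + ud * (R 0) ^ 2 + E * (l : ℝ) * ((l : ℝ) + 3)) * (2 * ud) ^ (l - 1) := by
    intro l
    induction l using Nat.strong_induction_on with
    | _ l ih =>
      intro h1 hlN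
      rcases l with _ | _ | _ | n
      · omega
      · -- l = 1
        simp only [Nat.sub_self, Finset.range_zero, Finset.sum_empty, pow_zero]
        push_cast
        nlinarith [sq_nonneg (R 0)]
      · -- l = 2
        have hs : ∑ k ∈ Finset.range (2 - 1), (R k) ^ 2 = (R 0) ^ 2 := by
          simp
        rw [hs]
        push_cast
        nlinarith [sq_nonneg (R 0), mul_nonneg hud0 (sq_nonneg (R 0))]
      · -- l = n + 3
        have hr := h (n+1) (by omega) (by omega)
        have ih1 := ih (n+2) (by omega) (by omega) (by omega)
        have ih2 := ih (n+1) (by omega) (by omega) (by omega)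
        simp only [show n+2-1 = n+1 from rfl, show n+1-1 = n from rfl, show n+1+1+1-1 = n+2 from rfl, show n+3-1 = n+2 from rfl] at *
        set T : ℝ := ∑ k ∈ Finset.range n, (R k) ^ 2 with hT
        have hsum : ∑ k ∈ Finset.range (n+2), (R k) ^ 2
            = (∑ k ∈ Finset.range (n+1), (R k) ^ 2) + (R (n+1)) ^ 2 :=
          Finset.sum_range_succ _ _
        set S : ℝ := ∑ k ∈ Finset.range (n+1), (R k) ^ 2 with hS
        set P : ℝ := (2 * ud) ^ n with hP
        have hP1 : (1:ℝ) ≤ P := one_le_pow₀ hx1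
        have hP0 : (0:ℝ) ≤ P := le_trans zero_le_one hP1
        have hpow1 : (2 * ud) ^ (n+1) = (2 * ud) * P := by rw [hP, pow_succ']
        have hpow2 : (2 * ud) ^ (n+2) = (2 * ud) * ((2 * ud) * P) := by
          rw [hP, pow_succ', pow_succ']
        rw [hsum, hpow2]
        rw [hpow1] at ih1
        push_cast at *
        have hC3 : (0:ℝ) ≤ 2 * A + ud * (R 0) ^ 2 + E * ((n:ℝ)+2) * ((n:ℝ)+5) := by
          nlinarith [sq_nonneg (R 0), mul_nonneg hE (by positivity : (0:ℝ) ≤ ((n:ℝ)+2) * ((n:ℝ)+5))]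
        have hC23 : 2 * A + ud * (R 0) ^ 2 + E * ((n:ℝ)+1) * ((n:ℝ)+4)
            ≤ 2 * A + ud * (R 0) ^ 2 + E * ((n:ℝ)+2) * ((n:ℝ)+5) := by
          nlinarith [mul_nonneg hE (by positivity : (0:ℝ) ≤ 2*(n:ℝ)+6)]
        have hT0 : (0:ℝ) ≤ T := Finset.sum_nonneg fun i _ => sq_nonneg _
        have hS0 : (0:ℝ) ≤ S := Finset.sum_nonneg fun i _ => sq_nonneg _
        clear_value T S P
        -- R(n+1)^2 ≤ 2ud * (2A + ud T + E(n+1)(n+4)) ≤ 2ud * C2' * P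
        have hr2 : (R (n+1)) ^ 2 ≤ 2 * ud * ((2 * A + ud * (R 0) ^ 2
            + E * ((n:ℝ)+1) * ((n:ℝ)+4)) * P) := by
          calc (R (n+1)) ^ 2 ≤ 2 * ud * (2 * A + ud * T + E * ((n:ℝ)+1) * ((n:ℝ)+4)) := by
                linarith [hr]
            _ ≤ 2 * ud * ((2 * A + ud * (R 0) ^ 2 + E * ((n:ℝ)+1) * ((n:ℝ)+4)) * P) := by
                apply mul_le_mul_of_nonneg_left _ hx0
                linarith [ih2]
        have h5 : ud * (R (n+1)) ^ 2 ≤ ud * (2 * ud * ((2 * A + ud * (R 0) ^ 2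
            + E * ((n:ℝ)+1) * ((n:ℝ)+4)) * P)) := mul_le_mul_of_nonneg_left hr2 hud0
        have h6 : ud * (2 * ud * ((2 * A + ud * (R 0) ^ 2 + E * ((n:ℝ)+1) * ((n:ℝ)+4)) * P))
            ≤ ud * (2 * ud * ((2 * A + ud * (R 0) ^ 2 + E * ((n:ℝ)+2) * ((n:ℝ)+5)) * P)) := by
          apply mul_le_mul_of_nonneg_left _ hud0
          apply mul_le_mul_of_nonneg_left _ hx0
          exact mul_le_mul_of_nonneg_right hC23 hP0
        have hqq : (1:ℝ) ≤ (2 * ud) * (2 * ud) := by nlinarith [hx1]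
        have hq : (1:ℝ) ≤ 2 * ud * (2 * ud * P) := by nlinarith [hqq, hP1]
        have h7 : E * (2*(n:ℝ)+8) ≤ E * (2*(n:ℝ)+8) * (2 * ud * (2 * ud * P)) := by
          nlinarith [mul_nonneg hE (by positivity : (0:ℝ) ≤ 2*(n:ℝ)+8), hq]
        have h8 : (2 * A + ud * (R 0) ^ 2 + E * ((n:ℝ)+2) * ((n:ℝ)+5)) * (2 * ud * P)
              + ud * (2 * ud * ((2 * A + ud * (R 0) ^ 2 + E * ((n:ℝ)+2) * ((n:ℝ)+5)) * P))
            ≤ (2 * A + ud * (R 0) ^ 2 + E * ((n:ℝ)+2) * ((n:ℝ)+5)) * (2 * ud * (2 * ud * P)) := by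
          nlinarith [mul_nonneg (mul_nonneg hC3 hP0) (mul_nonneg hud0 (sub_nonneg.2 hud))]
        nlinarith [h5, h6, h7, h8, ih1]
  intro l h1 hlN
  have hk := key l h1 hlN
  have hpow : (2 * ud) ^ l = (2 * ud) * (2 * ud) ^ (l - 1) := by
    conv_lhs => rw [show l = (l-1) + 1 by omega]
    rw [pow_succ']
  calc (R l) ^ 2 ≤ 2 * ud * (2 * A + ud * ∑ k ∈ Finset.range (l - 1), (R k) ^ 2
        + E * (l : ℝ) * ((l : ℝ) + 3)) := h l h1 hlN
    _ ≤ 2 * ud * ((2 * A + ud * (R 0) ^ 2 + E * (l : ℝ) * ((l : ℝ) + 3)) * (2 * ud) ^ (l-1)) :=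
        mul_le_mul_of_nonneg_left hk hx0
    _ = (2 * A + ud * (R 0) ^ 2 + E * (l : ℝ) * ((l : ℝ) + 3)) * (2 * ud) ^ l := by
        rw [hpow]; ring
end
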